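/- For the Mallows distribution with dispersion parameter 0 ≤ φ < 1 generated by the repeated insertion model (RIM) over items 1,...,Q inserted in order, where item s is inserted at position l ∈ {1,...,s} of the current partial sequence with probability φ^{s-l}/(1+φ+...+φ^{s-1}), the probability that item 1 occupies position r after the first s items have been inserted equals φ^{r-1}/(1+φ+...+φ^{s-1}), for all 1 ≤ r ≤ s ≤ Q. -/

import Mathlib

/-- Probability that, in the repeated insertion model with dispersion `φ`,
the item inserted into a current sequence of length `s` (so the new sequence
has length `s`) is placed at position `l ∈ {1,…,s}`. -/
noncomputable def insP (φ : ℝ) (s l : ℕ) : ℝ :=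
  φ ^ (s - l) / ∑ t ∈ Finset.range s, φ ^ t

/-- `qpos φ s r` : probability that item 1 occupies position `r` after the
first `s` items have been inserted by the repeated insertion model. -/
noncomputable def qpos (φ : ℝ) : ℕ → ℕ → ℝ
  | 0, _ => 0
  | 1, r => if r = 1 then 1 else 0
  | (s+2), r =>
      qpos φ (s+1) r * (∑ l ∈ Finset.Icc (r+1) (s+2), insP φ (s+2) l)
      + qpos φ (s+1) (r-1) * (∑ l ∈ Finset.Icc 1 (r-1), insP φ (s+2) l)

lemma Spos (φ : ℝ) (hφ0 : 0 ≤ φ) (n : ℕ) (hn : 1 ≤ n) :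
    0 < ∑ t ∈ Finset.range n, φ ^ t := by
  have := Finset.single_le_sum (f := fun t => φ ^ t)
    (fun i _ => pow_nonneg hφ0 i) (Finset.mem_range.mpr hn)
  simp at this
  linarith

lemma alg (a b c d A B S1 S2 : ℝ) (h1 : S1 ≠ 0) (h2 : S2 ≠ 0)
    (hpow : b * d = a * c) (hsplit : S1 = A + c * B) :
    a / S1 * (A / S2) + b / S1 * (d * B / S2) = a / S2 := by
  field_simp
  linear_combination B * hpow - a * hsplit

lemma key (φ : ℝ) (hφ0 : 0 ≤ φ) : ∀ s r, 1 ≤ r → r ≤ s →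
    qpos φ s r = φ ^ (r - 1) / ∑ t ∈ Finset.range s, φ ^ t
  | 0, r, hr, hrs => by omega
  | 1, r, hr, hrs => by
      have : r = 1 := by omega
      subst this; simp [qpos]
  | (s+2), r, hr, hrs => by
      have hS1 : (0:ℝ) < ∑ t ∈ Finset.range (s+1), φ ^ t := Spos φ hφ0 _ (by omega)
      have hS2 : (0:ℝ) < ∑ t ∈ Finset.range (s+2), φ ^ t := Spos φ hφ0 _ (by omega)
      have hA : ∑ l ∈ Finset.Icc (r+1) (s+2), φ ^ (s+2-l)
          = ∑ t ∈ Finset.range (s+2-r), φ ^ t := by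
        rw [← Finset.Ico_add_one_right_eq_Icc, Finset.sum_Ico_eq_sum_range,
          ← Finset.sum_range_reflect (fun t => φ ^ t) (s+2-r)]
        have hrange : s+2+1-(r+1) = s+2-r := by omega
        rw [hrange]
        refine Finset.sum_congr rfl fun i hi => ?_
        simp only [Finset.mem_range] at hi
        congr 1; omega
      have hA' : ∑ l ∈ Finset.Icc (r+1) (s+2), insP φ (s+2) l
          = (∑ t ∈ Finset.range (s+2-r), φ ^ t) / ∑ t ∈ Finset.range (s+2), φ ^ t := by
        simp only [insP, ← Finset.sum_div, hA]
      have hB : ∑ l ∈ Finset.Icc 1 (r-1), insP φ (s+2) l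
          = φ ^ (s+3-r) * (∑ t ∈ Finset.range (r-1), φ ^ t)
            / ∑ t ∈ Finset.range (s+2), φ ^ t := by
        simp only [insP, ← Finset.sum_div]
        congr 1
        rw [Finset.mul_sum, ← Finset.Ico_add_one_right_eq_Icc, Finset.sum_Ico_eq_sum_range,
          ← Finset.sum_range_reflect (fun t => φ ^ (s+3-r) * φ ^ t) (r-1)]
        have hrange : r-1+1-1 = r-1 := by omega
        rw [hrange]
        refine Finset.sum_congr rfl fun i hi => ?_
        simp only [Finset.mem_range] at hi
        rw [← pow_add]
        congr 1; omega
      have hsplit : ∑ t ∈ Finset.range (s+1), φ ^ t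
          = (∑ t ∈ Finset.range (s+2-r), φ ^ t)
            + φ ^ (s+2-r) * ∑ t ∈ Finset.range (r-1), φ ^ t := by
        have h : s+1 = (s+2-r) + (r-1) := by omega
        rw [h, Finset.sum_range_add, Finset.mul_sum]
        simp [pow_add]
      rcases Nat.lt_or_ge r 2 with h2 | h2
      · -- r = 1
        have : r = 1 := by omega
        subst this
        have IH1 : qpos φ (s+1) 1 = φ ^ 0 / ∑ t ∈ Finset.range (s+1), φ ^ t :=
          key φ hφ0 (s+1) 1 le_rfl (by omega)
        have hempty : Finset.Icc 1 0 = (∅ : Finset ℕ) := rfl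
        simp only [qpos, IH1, hA', hempty, Finset.sum_empty, mul_zero, add_zero,
          show (1:ℕ)-1 = 0 by omega, show s+2-1 = s+1 by omega, pow_zero]
        field_simp
      · rcases Nat.lt_or_ge r (s+2) with h3 | h3
        · -- 2 ≤ r ≤ s+1
          have IH1 : qpos φ (s+1) r = φ ^ (r-1) / ∑ t ∈ Finset.range (s+1), φ ^ t :=
            key φ hφ0 (s+1) r hr (by omega)
          have IH2 : qpos φ (s+1) (r-1) = φ ^ (r-2) / ∑ t ∈ Finset.range (s+1), φ ^ t := by
            have := key φ hφ0 (s+1) (r-1) (by omega) (by omega)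
            rwa [show r-1-1 = r-2 by omega] at this
          have hpow : φ ^ (r-2) * φ ^ (s+3-r) = φ ^ (r-1) * φ ^ (s+2-r) := by
            rw [← pow_add, ← pow_add]; congr 1; omega
          simp only [qpos, IH1, IH2, hA', hB]
          exact alg _ _ _ _ _ _ _ _ (ne_of_gt hS1) (ne_of_gt hS2) hpow hsplit
        · -- r = s+2
          have : r = s+2 := by omega
          subst this
          have IH2 : qpos φ (s+1) (s+1) = φ ^ s / ∑ t ∈ Finset.range (s+1), φ ^ t := by
            have := key φ hφ0 (s+1) (s+1) (by omega) le_rfl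
            rwa [show s+1-1 = s by omega] at this
          have hempty : Finset.Icc (s+2+1) (s+2) = (∅ : Finset ℕ) := by
            apply Finset.Icc_eq_empty; omega
          rw [show s+2-1 = s+1 by omega, show s+3-(s+2) = 1 by omega, pow_one] at hB
          simp only [qpos, hempty, Finset.sum_empty, zero_mul, mul_zero, zero_add,
            show s+2-1 = s+1 by omega, IH2, hB]
          field_simp
          ring

/-- In the repeated insertion model over items `1,…,Q` with dispersion
`0 ≤ φ < 1`, the probability that item 1 occupies position `r` after the
first `s` items have been inserted equals `φ^(r-1)/(1+φ+⋯+φ^(s-1))`,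
for all `1 ≤ r ≤ s ≤ Q`. -/
theorem stmt0 (φ : ℝ) (hφ0 : 0 ≤ φ) (hφ1 : φ < 1) (Q r s : ℕ)
    (hr : 1 ≤ r) (hrs : r ≤ s) (hsQ : s ≤ Q) :
    qpos φ s r = φ ^ (r - 1) / ∑ t ∈ Finset.range s, φ ^ t :=
  key φ hφ0 s r hr hrs
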